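/- Let δ_R, δ_B be positive integers, let λ ∈ ℂ, and suppose z ∈ ℂ satisfies z² − tr T₀(λ)·z + 1/(δ_R δ_B) = 0 and |z| = (δ_R δ_B)^{−1/2}. Then λ is real and λ ≥ 0. -/

import Mathlib

/-- `c(λ) = cos ω` where `ω` is a complex square root of `λ`
(independent of the choice of square root). -/
noncomputable def cf (z : ℂ) : ℂ := Complex.cos (z ^ ((1 : ℂ) / 2))

/-- `s(λ) = sin(ω)/ω` where `ω` is a complex square root of `λ`
(independent of the choice of square root), with `s(0) = 1`. -/
noncomputable def sf (z : ℂ) : ℂ :=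
  if z = 0 then 1 else Complex.sin (z ^ ((1 : ℂ) / 2)) / z ^ ((1 : ℂ) / 2)

/-- The edge propagation matrix `M(λ)`; note `c'(λ) = -λ·s(λ)` and `s'(λ) = c(λ)`. -/
noncomputable def Mmat (lam : ℂ) : Matrix (Fin 2) (Fin 2) ℂ :=
  !![cf lam, sf lam; -lam * sf lam, cf lam]

/-- The jump matrix `J_δ = diag(1, 1/δ)`. -/
noncomputable def Jmat (d : ℝ) : Matrix (Fin 2) (Fin 2) ℂ := !![1, 0; 0, 1 / (d : ℂ)]

/-- The transition matrix `T₀(λ) = J_R · M(λ) · J_B · M(λ)`. -/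
noncomputable def T0 (dR dB : ℝ) (lam : ℂ) : Matrix (Fin 2) (Fin 2) ℂ :=
  Jmat dR * Mmat lam * Jmat dB * Mmat lam

lemma trace_T0' (dR dB : ℝ) (lam : ℂ) :
    (T0 dR dB lam).trace =
      cf lam ^ 2 * (1 + 1 / ((dR : ℂ) * dB)) - lam * sf lam ^ 2 * (1 / dR + 1 / dB) := by
  simp [T0, Mmat, Jmat, Matrix.trace, Matrix.mul_apply, Fin.sum_univ_two]
  ring

lemma cos_real_decomp (w : ℂ) (t : ℝ) (hC : Complex.cos w = (t : ℂ)) :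
    Real.cos w.re * Real.cosh w.im = t ∧ Real.sin w.re * Real.sinh w.im = 0 := by
  have h := Complex.cos_eq w
  rw [hC] at h
  have hre := congrArg Complex.re h
  have him := congrArg Complex.im h
  simp [Complex.cos_ofReal_re, Complex.cos_ofReal_im, Complex.sin_ofReal_re,
    Complex.sin_ofReal_im, Complex.cosh_ofReal_re, Complex.cosh_ofReal_im,
    Complex.sinh_ofReal_re, Complex.sinh_ofReal_im, Complex.mul_re, Complex.mul_im] at hre him
  refine ⟨by linarith, ?_⟩
  rcases him with h | h
  · rw [h, zero_mul]
  · rw [h, Real.sinh_zero, mul_zero]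

lemma abs_t_le (s fr ar br : ℝ) (hs0 : 0 < s) (harpos : 0 < ar) (hbrpos : 0 < br)
    (hfr1 : fr ≤ 2 / s) (hfr2 : -(2 / s) ≤ fr) (h2sa : 2 / s ≤ ar) (h2sb : 2 / s ≤ br) :
    |(2 * fr - ar + br) / (ar + br)| ≤ 1 := by
  rw [abs_div, abs_of_pos (by positivity : (0:ℝ) < ar + br), div_le_one (by positivity)]
  rw [abs_le]
  constructor <;> linarith

lemma im_eq_zero_of_cos_real (w : ℂ) (t : ℝ) (hC : Complex.cos w = (t : ℂ)) (ht : |t| ≤ 1) :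
    w.im = 0 := by
  obtain ⟨hre, him⟩ := cos_real_decomp w t hC
  rcases mul_eq_zero.mp him with h | h
  · by_contra hv
    have hc2 : Real.cos w.re ^ 2 = 1 := by
      have := Real.sin_sq_add_cos_sq w.re
      nlinarith
    have hcosh : 1 < Real.cosh w.im := Real.one_lt_cosh.mpr hv
    have : 1 < |t| := by
      rw [← hre, abs_mul]
      have h1 : |Real.cos w.re| = 1 := by
        have := abs_nonneg (Real.cos w.re); nlinarith [sq_abs (Real.cos w.re)]
      rw [h1, one_mul, abs_of_pos (lt_trans one_pos hcosh)]
      exact hcosh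
    linarith
  · exact Real.sinh_eq_zero.mp h

theorem stmt_9 (dR dB : ℕ) (hR : 0 < dR) (hB : 0 < dB) (lam z : ℂ)
    (hroot : z ^ 2 - (T0 (dR : ℝ) (dB : ℝ) lam).trace * z + 1 / ((dR : ℂ) * dB) = 0)
    (habs : ‖z‖ = 1 / Real.sqrt ((dR : ℝ) * dB)) :
    lam.im = 0 ∧ 0 ≤ lam.re := by
  -- real setup
  have hdR1 : (1:ℝ) ≤ (dR:ℝ) := by exact_mod_cast hR
  have hdB1 : (1:ℝ) ≤ (dB:ℝ) := by exact_mod_cast hB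
  set s := Real.sqrt ((dR:ℝ) * dB) with hsdef
  have hDpos : (0:ℝ) < (dR:ℝ) * dB := by positivity
  have hs0 : 0 < s := Real.sqrt_pos.mpr hDpos
  have hssq : s ^ 2 = (dR:ℝ) * dB := Real.sq_sqrt hDpos.le
  -- f = trace is real, equal to 2 * z.re
  set f : ℂ := (T0 (dR : ℝ) (dB : ℝ) lam).trace with hfdef
  have hz0 : z ≠ 0 := by
    have hane : ‖z‖ ≠ 0 := by rw [habs]; positivity
    simpa using hane
  have hnsq : z * (starRingEnd ℂ) z = 1 / ((dR:ℂ) * dB) := by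
    rw [Complex.mul_conj]
    have : Complex.normSq z = 1 / ((dR:ℝ) * dB) := by
      rw [← Complex.sq_norm, habs, div_pow, one_pow, hssq]
    rw [this]; push_cast; ring
  have hf : f = z + (starRingEnd ℂ) z := by
    have h1 : f * z = z ^ 2 + z * (starRingEnd ℂ) z := by rw [hnsq]; linear_combination -hroot
    exact mul_right_cancel₀ hz0 (by linear_combination h1)
  set fr : ℝ := 2 * z.re with hfrdef
  have hfC : f = ((fr : ℝ) : ℂ) := by rw [hf, Complex.add_conj]
  have hfr_bound : |fr| ≤ 2 / s := by
    have h1 : |z.re| ≤ ‖z‖ := Complex.abs_re_le_norm z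
    rw [habs] at h1
    rw [hfrdef, abs_mul, abs_two]
    calc (2:ℝ) * |z.re| ≤ 2 * (1/s) := by linarith
      _ = 2 / s := by ring
  -- trivial case lam = 0
  by_cases hlam0 : lam = 0
  · subst hlam0; simp
  -- square root
  set ω : ℂ := lam ^ ((1:ℂ)/2) with hωdef
  have hω2 : ω ^ 2 = lam := by
    rw [hωdef, one_div]; exact Complex.cpow_ofNat_inv_pow lam 2
  have hω0 : ω ≠ 0 := by
    intro h; apply hlam0; rw [← hω2, h]; ring
  -- real constants
  set ar : ℝ := 1 + 1 / ((dR:ℝ) * dB) with hardef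
  set br : ℝ := 1 / (dR:ℝ) + 1 / (dB:ℝ) with hbrdef
  have harpos : 0 < ar := by positivity
  have hbrpos : 0 < br := by positivity
  set A : ℂ := ((ar : ℝ) : ℂ) with hAdef
  set B : ℂ := ((br : ℝ) : ℂ) with hBdef
  have hABne : A + B ≠ 0 := by
    rw [hAdef, hBdef, ← Complex.ofReal_add]
    exact_mod_cast (by positivity : (0:ℝ) < ar + br).ne'
  -- f in terms of cos ω
  have hfeq : ((fr : ℝ) : ℂ) = Complex.cos ω ^ 2 * A - Complex.sin ω ^ 2 * B := by
    rw [← hfC, hfdef, trace_T0']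
    have hcf : cf lam = Complex.cos ω := rfl
    have hsf : sf lam = Complex.sin ω / ω := by rw [sf, if_neg hlam0]
    rw [hcf, hsf, hAdef, hBdef, hardef, hbrdef]
    push_cast
    field_simp
    rw [← hω2]
    ring
  -- cos (2ω) is a real number t with |t| ≤ 1
  set t : ℝ := (2 * fr - ar + br) / (ar + br) with htdef
  have hc2 : Complex.cos (2 * ω) = ((t : ℝ) : ℂ) := by
    rw [Complex.cos_two_mul]
    have htc : ((t : ℝ) : ℂ) = (2 * ((fr:ℝ):ℂ) - A + B) / (A + B) := by
      rw [htdef, hAdef, hBdef]; push_cast; ring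
    rw [htc, eq_div_iff hABne]
    have hs2 := Complex.sin_sq ω
    linear_combination (-2 : ℂ) * hfeq + 2 * B * hs2
  have hfr1 : fr ≤ 2 / s := (abs_le.mp hfr_bound).2
  have hfr2 : -(2 / s) ≤ fr := (abs_le.mp hfr_bound).1
  have h2s : 2 * s ≤ (dR:ℝ) + dB := by
    nlinarith [sq_nonneg ((dR:ℝ) - dB), hssq, hs0]
  have h2sb : 2 / s ≤ br := by
    rw [hbrdef, div_add_div _ _ (by positivity : (dR:ℝ) ≠ 0) (by positivity : (dB:ℝ) ≠ 0),
      div_le_div_iff₀ hs0 hDpos]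
    nlinarith [mul_le_mul_of_nonneg_right h2s hs0.le]
  have h2sa : 2 / s ≤ ar := by
    have h1 : (1:ℝ) / ((dR:ℝ) * dB) = (1/s)^2 := by
      rw [div_pow, one_pow, hssq]
    rw [hardef, h1]
    have h2 : 2 / s = 2 * (1/s) := by ring
    rw [h2]
    nlinarith [sq_nonneg (1 - 1/s)]
  have ht1 : |t| ≤ 1 := by
    rw [htdef]
    exact abs_t_le s fr ar br hs0 harpos hbrpos hfr1 hfr2 h2sa h2sb
  -- conclude ω is real
  have hwim : (2 * ω).im = 0 := im_eq_zero_of_cos_real (2 * ω) t hc2 ht1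
  have hωim : ω.im = 0 := by
    have h2 : (2 * ω).im = 2 * ω.im := by simp [Complex.mul_im]
    rw [hwim] at h2
    have := h2.symm
    linarith [mul_self_nonneg ω.im]
  rw [← hω2]
  constructor
  · simp [pow_two, Complex.mul_im, hωim]
  · have h3 : (ω ^ 2).re = ω.re * ω.re - ω.im * ω.im := by simp [pow_two, Complex.mul_re]
    rw [h3, hωim]
    simpa using mul_self_nonneg ω.re
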